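/- arXiv:1511.07070 — 2 statements merged into one kernel-verified Lean document; each statement's English description precedes it below -/
import Mathlib

section
/- For vectors a, b ∈ {0,1}^d, the string VG'(b) = b₁b₂…b_d can be derived from the regular expression VG(a) = CG(a₁)CG(a₂)…CG(a_d) if and only if the dot product a·b = Σⱼ aⱼbⱼ equals 0, where CG(0) = (0|1) and CG(1) = 0. -/
open RegularExpression

/-- Coordinate gadget: `CG 0 = (0|1)`, `CG 1 = 0`. Bits are `Bool` (false = 0, true = 1). -/
def CG : Bool → RegularExpression Bool
  | false => char false + char true
  | true  => char false

/-- Pattern vector gadget: concatenation of the coordinate gadgets. -/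
def VG {d : ℕ} (a : Fin d → Bool) : RegularExpression Bool :=
  (List.ofFn fun j => CG (a j)).prod

/-- Text vector gadget: the string of the bits of `b`. -/
def VG' {d : ℕ} (b : Fin d → Bool) : List Bool :=
  List.ofFn fun j => b j

lemma CG_mem (x : Bool) (s : List Bool) :
    s ∈ (CG x).matches' ↔ ∃ c, s = [c] ∧ (x && c) = false := by
  have h1 : ∀ c s, s ∈ (char c : RegularExpression Bool).matches' ↔ s = [c] := by
    intro c s; rw [matches'_char]; exact Set.mem_singleton_iff
  cases x
  · rw [show CG false = char false + char true from rfl, matches'_add]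
    rw [Language.mem_add, h1, h1]
    constructor
    · rintro (rfl | rfl)
      exacts [⟨false, rfl, rfl⟩, ⟨true, rfl, rfl⟩]
    · rintro ⟨c, rfl, -⟩; cases c <;> simp
  · rw [show CG true = char false from rfl, h1]
    constructor
    · rintro rfl; exact ⟨false, rfl, rfl⟩
    · rintro ⟨c, rfl, hc⟩; simp at hc; rw [hc]

theorem stmt1 {d : ℕ} (a b : Fin d → Bool) :
    VG' b ∈ (VG a).matches' ↔ ∀ j, (a j && b j) = false := by
  induction d with
  | zero =>
      simp [VG, VG', matches'_epsilon]
  | succ n ih =>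
      rw [VG, VG', List.ofFn_succ, List.ofFn_succ, List.prod_cons, matches'_mul]
      constructor
      · rintro ⟨s, hs, t, ht, hst⟩
        have hs := (CG_mem _ _).mp hs
        obtain ⟨c, rfl, hc⟩ := hs
        simp only [List.cons_append, List.nil_append, List.cons.injEq] at hst
        obtain ⟨rfl, rfl⟩ := hst
        have := (ih (fun j => a j.succ) (fun j => b j.succ)).mp ht
        intro j
        refine Fin.cases ?_ (fun j => this j) j
        exact hc
      · intro h
        refine ⟨[b 0], ?_, _, (ih (fun j => a j.succ) (fun j => b j.succ)).mpr
          (fun j => h j.succ), rfl⟩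
        exact (CG_mem _ _).mpr ⟨b 0, rfl, h 0⟩
end

section
/- Let p be a regular expression over an alphabet Σ and t a string over Σ. Let x ∈ Σ be a symbol occurring neither in p nor in t. Then the string x t x can be derived from the regular expression (x ∘ p ∘ x)* if and only if t can be derived from p. -/
open RegularExpression

/-- The symbol `x` occurs as a leaf of the regular expression. -/
def occurs {α : Type*} (x : α) : RegularExpression α → Prop
  | .zero => False
  | .epsilon => False
  | .char a => a = x
  | .plus p q => occurs x p ∨ occurs x q
  | .comp p q => occurs x p ∨ occurs x q
  | .star p => occurs x p

lemma not_mem_of_not_occurs {α : Type*} (x : α) :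
    ∀ p : RegularExpression α, ¬ occurs x p → ∀ u ∈ p.matches', x ∉ u := by
  intro p
  induction p with
  | zero => intro _ u hu; exact hu.elim
  | epsilon =>
      intro _ u hu
      obtain rfl : u = [] := hu
      simp
  | char a =>
      intro h u hu
      simp only [matches'_char, Set.mem_singleton_iff] at hu
      subst hu
      simp only [occurs] at h
      simp only [List.mem_singleton]
      exact fun e => h e.symm
  | plus q r ihq ihr =>
      intro h u hu
      simp only [occurs] at h
      push_neg at h
      rcases hu with hu | hu
      · exact ihq h.1 u hu
      · exact ihr h.2 u hu
  | comp q r ihq ihr =>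
      intro h u hu
      simp only [occurs] at h
      push_neg at h
      rw [show RegularExpression.comp q r = q * r from rfl, matches'_mul,
        Language.mem_mul] at hu
      obtain ⟨a, ha, b, hb, rfl⟩ := hu
      simp only [List.mem_append]
      rintro (hx | hx)
      · exact ihq h.1 a ha hx
      · exact ihr h.2 b hb hx
  | star q ih =>
      intro h u hu
      rw [matches'_star, Language.mem_kstar] at hu
      obtain ⟨L, rfl, hL⟩ := hu
      intro hx
      rw [List.mem_flatten] at hx
      obtain ⟨l, hl, hxl⟩ := hx
      exact ih h l (hL l hl) hxl

theorem stmt10 {α : Type*} (p : RegularExpression α) (t : List α) (x : α)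
    (hxt : x ∉ t) (hxp : ¬ occurs x p) :
    ([x] ++ t ++ [x]) ∈ ((char x * p * char x).star).matches' ↔ t ∈ p.matches' := by
  letI : DecidableEq α := Classical.decEq α
  have piece : ∀ s, s ∈ (char x * p * char x).matches' ↔
      ∃ u ∈ p.matches', s = [x] ++ u ++ [x] := by
    intro s
    rw [matches'_mul, matches'_mul, matches'_char, Language.mem_mul]
    constructor
    · rintro ⟨a, ha, b, hb, rfl⟩
      rw [Language.mem_mul] at ha
      obtain ⟨c, hc, d, hd, rfl⟩ := ha
      obtain rfl : c = [x] := hc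
      obtain rfl : b = [x] := hb
      exact ⟨d, hd, rfl⟩
    · rintro ⟨u, hu, rfl⟩
      refine ⟨[x] ++ u, ?_, [x], rfl, rfl⟩
      rw [Language.mem_mul]
      exact ⟨[x], rfl, u, hu, rfl⟩
  rw [matches'_star]
  constructor
  · intro h
    rw [Language.mem_kstar] at h
    obtain ⟨L, hjoin, hL⟩ := h
    have hcnt : ∀ s ∈ L, s.count x = 2 := by
      intro s hs
      obtain ⟨u, hu, rfl⟩ := (piece s).1 (hL s hs)
      have hxu : x ∉ u := not_mem_of_not_occurs x p hxp u hu
      simp [List.count_append, List.count_eq_zero_of_not_mem hxu]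
    have h1 : ([x] ++ t ++ [x]).count x = 2 := by
      simp [List.count_append, List.count_eq_zero_of_not_mem hxt]
    have h2 : L.flatten.count x = (L.map (List.count x)).sum := List.count_flatten
    have h3 : (L.map (List.count x)).sum = (L.map (List.count x)).length • 2 := by
      apply List.sum_eq_card_nsmul
      intro n hn
      rw [List.mem_map] at hn
      obtain ⟨s, hs, rfl⟩ := hn
      exact hcnt s hs
    rw [List.length_map, smul_eq_mul] at h3
    have hlen : L.length = 1 := by
      rw [← hjoin, h1] at h2
      omega
    obtain ⟨s, rfl⟩ := List.length_eq_one_iff.1 hlen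
    obtain ⟨u, hu, hs⟩ := (piece s).1 (hL s (List.mem_singleton_self s))
    subst hs
    have h' : [x] ++ t ++ [x] = [x] ++ u ++ [x] := by simpa using hjoin
    have ht : t = u := by
      simp only [List.append_assoc, List.singleton_append] at h'
      have h'' : t ++ [x] = u ++ [x] := by injection h'
      exact (List.append_left_inj [x]).1 h''
    rwa [ht]
  · intro h
    rw [Language.mem_kstar]
    refine ⟨[[x] ++ t ++ [x]], by simp, ?_⟩
    intro y hy
    rw [List.mem_singleton] at hy
    subst hy
    exact (piece _).2 ⟨t, h, rfl⟩
end
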